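/- Let p be an odd prime, q = p^{2n}, σ: F_q → F_q the map x ↦ x^{p^n}, and θ a generator of F_q^*. In the Dickson division ring D with elements {x + λy : x, y ∈ F_q} and multiplication (x+λy)·(z+λt) = xz + θ·t·y^σ + λ(yz + x^σ t), the set I = {(x1 + λx2, y1 + λy2) : x1, y1 ∈ F_{p^n}, x2 a nonzero square in F_q, y2 ∈ F_q} is an independent set of size (1/2)q^2(q-1) in the polarity graph G(Π_D, ω). -/

import Mathlib

open Finset in
lemma count_pow_eq_one_aux {F : Type*} [Field F] [Fintype F] [DecidableEq F] {d : ℕ}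
    (hd : 0 < d) (hdvd : d ∣ Fintype.card Fˣ) :
    (Finset.univ.filter (fun x : Fˣ => x ^ d = 1)).card = d := by
  obtain ⟨g, hg⟩ := IsCyclic.exists_generator (α := Fˣ)
  have hog : orderOf g = Fintype.card Fˣ := by
    rw [← Nat.card_eq_fintype_card]; exact orderOf_eq_card_of_forall_mem_zpowers hg
  set a := g ^ (Fintype.card Fˣ / d) with ha
  have hk : Fintype.card Fˣ / d ∣ Fintype.card Fˣ := Nat.div_dvd_of_dvd hdvd
  have hoa : orderOf a = d := by
    rw [ha, orderOf_pow, hog, Nat.gcd_eq_right hk, Nat.div_div_self hdvd Fintype.card_pos.ne']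
  apply le_antisymm
  · calc (Finset.univ.filter (fun x : Fˣ => x ^ d = 1)).card
        ≤ Multiset.card (Polynomial.nthRoots d ((Units.coeHom F) 1)) :=
          card_nthRoots_subgroup_units (Units.coeHom F) (fun _ _ h => Units.ext h) hd 1
      _ ≤ d := Polynomial.card_nthRoots d _
  · have hinj : Set.InjOn (a ^ ·) (Set.Iio d) := by
      have := pow_injOn_Iio_orderOf (x := a)
      rwa [hoa] at this
    calc d = (Finset.range d).card := (Finset.card_range d).symm
      _ ≤ _ := Finset.card_le_card_of_injOn (a ^ ·)
          (fun k _ => by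
            simp only [Finset.mem_coe, Finset.mem_filter, Finset.mem_univ, true_and]
            rw [← pow_mul, mul_comm, pow_mul, ← hoa, pow_orderOf_eq_one, one_pow])
          (fun k hk1 l hl1 h => hinj (by simpa using hk1) (by simpa using hl1) h)

lemma count_fixed_aux {F : Type*} [Field F] [Fintype F] [DecidableEq F] {m : ℕ} (hm : 2 ≤ m)
    (hdvd : m - 1 ∣ Fintype.card Fˣ) :
    (Finset.univ.filter (fun x : F => x ^ m = x)).card = m := by
  have h1 : Finset.univ.filter (fun x : F => x ^ m = x)
      = insert (0:F) ((Finset.univ.filter (fun u : Fˣ => u ^ (m-1) = 1)).image Units.val) := by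
    ext x
    simp only [Finset.mem_filter, Finset.mem_univ, true_and, Finset.mem_insert, Finset.mem_image]
    constructor
    · intro hx
      rcases eq_or_ne x 0 with h0 | h0
      · exact Or.inl h0
      · refine Or.inr ⟨Units.mk0 x h0, ?_, rfl⟩
        have hx1 : x ^ (m - 1) = 1 := by
          have : x ^ (m - 1) * x = 1 * x := by
            rw [one_mul, ← pow_succ, Nat.sub_add_cancel (by omega), hx]
          exact mul_right_cancel₀ h0 this
        ext
        push_cast
        exact hx1
    · rintro (rfl | ⟨u, hu, rfl⟩)
      · simp [zero_pow (by omega : m ≠ 0)]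
      · have hu' : (u:F) ^ (m-1) = 1 := by
          rw [← Units.val_pow_eq_pow_val, hu, Units.val_one]
        calc (u:F) ^ m = (u:F)^(m-1) * u := by
              rw [← pow_succ, Nat.sub_add_cancel (by omega)]
          _ = u := by rw [hu', one_mul]
  have h0 : (0:F) ∉ (Finset.univ.filter (fun u : Fˣ => u ^ (m-1) = 1)).image Units.val := by
    intro h
    obtain ⟨u, -, hu⟩ := Finset.mem_image.mp h
    exact u.ne_zero hu
  rw [h1, Finset.card_insert_of_notMem h0,
    Finset.card_image_of_injective _ (fun _ _ h => Units.ext h),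
    count_pow_eq_one_aux (by omega) hdvd]
  omega

/-- In the polarity graph of the plane coordinatized by the Dickson division
ring `D` (elements `x + λy` modelled as pairs `(x, y)` over `F_q`, `q = p^{2n}`), the set
`I = {(x1 + λx2, y1 + λy2) : x1, y1 ∈ F_{p^n}, x2 a nonzero square, y2 ∈ F_q}` is an
independent set of size `q^2(q-1)/2`. Adjacency of affine points `u = (x1+λx2, y1+λy2)` and
`v = (z1+λz2, t1+λt2)` is `(z1 + λ z2^σ)·(x1 + λx2) = -y1-t1 + λ(-y2 - t2^σ)`. -/
theorem stmt_2 {p n : ℕ} (hp : p.Prime) (hpodd : Odd p) (hn : 0 < n)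
    {F : Type*} [Field F] [Fintype F] (q : ℕ) (hq : q = p ^ (2 * n))
    (hF : Fintype.card F = q)
    (θ : Fˣ) (hθ : ∀ x : Fˣ, x ∈ Subgroup.zpowers θ)
    (σ : F → F) (hσ : ∀ x, σ x = x ^ p ^ n)
    (mul : F × F → F × F → F × F)
    (hmul : ∀ x y z t : F, mul (x, y) (z, t) = (x * z + (θ : F) * t * σ y, y * z + σ x * t))
    (G : SimpleGraph ((F × F) × (F × F)))
    (hG : G = SimpleGraph.fromRel (fun u v =>
      mul (v.1.1, σ v.1.2) u.1 = (-u.2.1 - v.2.1, -u.2.2 - σ v.2.2)))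
    (I : Set ((F × F) × (F × F)))
    (hI : I = {w | w.1.1 ^ p ^ n = w.1.1 ∧ w.2.1 ^ p ^ n = w.2.1 ∧
      ∃ u : F, u ≠ 0 ∧ u ^ 2 = w.1.2}) :
    (I.Pairwise fun u v => ¬ G.Adj u v) ∧ I.ncard = q ^ 2 * (q - 1) / 2 := by
  classical
  set m : ℕ := p ^ n with hm
  have hp3 : 3 ≤ p := by
    have h2 : p ≠ 2 := by rintro rfl; exact (by decide : ¬ Odd 2) hpodd
    have := hp.two_le
    omega
  have hm3 : 3 ≤ m := le_trans hp3 (Nat.le_self_pow hn.ne' p)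
  have hmodd : Odd m := hpodd.pow
  obtain ⟨k, hk⟩ := hmodd
  have hk1 : 1 ≤ k := by omega
  have hqm : q = m ^ 2 := by
    rw [hq, hm, ← pow_mul, Nat.mul_comm]
  have hcard : Fintype.card F = m ^ 2 := by rw [hF, hqm]
  have hsq2 : m ^ 2 = 4 * (k*k) + 4 * k + 1 := by rw [hk]; ring
  have hq1 : Fintype.card Fˣ = m ^ 2 - 1 := by rw [Fintype.card_units, hcard]
  -- characteristic
  have hp0 : (p : F) = 0 := by
    have h := FiniteField.cast_card_eq_zero F
    rw [hF, hq] at h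
    push_cast at h
    exact pow_eq_zero_iff (by omega : 2 * n ≠ 0) |>.mp h
  have hchar : ringChar F = p := CharP.ringChar_of_prime_eq_zero hp hp0
  haveI : CharP F p := hchar ▸ ringChar.charP F
  haveI : Fact p.Prime := ⟨hp⟩
  have hchar2 : ringChar F ≠ 2 := by rw [hchar]; omega
  -- θ is a nonsquare
  have hθns : ¬ IsSquare (θ : F) := by
    intro hsq
    rw [FiniteField.isSquare_iff hchar2 θ.ne_zero] at hsq
    have hsq' : θ ^ (Fintype.card F / 2) = 1 := by
      ext; push_cast; exact hsq
    have hdvd := orderOf_dvd_of_pow_eq_one hsq'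
    rw [orderOf_eq_card_of_forall_mem_zpowers hθ, Nat.card_eq_fintype_card, hq1] at hdvd
    have h2 : 0 < Fintype.card F / 2 := by rw [hcard]; omega
    have hle := Nat.le_of_dvd h2 hdvd
    rw [hcard] at hle
    omega
  -- each fixed point of σ that is nonzero has e^(m-1)=1 hence is a square
  have hsub : m - 1 ∣ Fintype.card Fˣ := by
    refine ⟨m + 1, ?_⟩
    rw [hq1]
    have hm1 : m - 1 = 2 * k := by omega
    have h4 : (m - 1) * (m + 1) = 4 * (k*k) + 4*k := by rw [hm1, hk]; ring
    omega
  -- key independence computation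
  have key : ∀ u v : (F × F) × (F × F), u ∈ I → v ∈ I →
      ¬ (mul (v.1.1, σ v.1.2) u.1 = (-u.2.1 - v.2.1, -u.2.2 - σ v.2.2)) := by
    rintro ⟨⟨x1, x2⟩, y1, y2⟩ ⟨⟨z1, z2⟩, t1, t2⟩ hu hv hrel
    rw [hI] at hu hv
    obtain ⟨hx1, hy1, a, ha0, ha⟩ := hu
    obtain ⟨hz1, ht1, b, hb0, hb⟩ := hv
    simp only at hx1 hy1 hz1 ht1 ha hb
    rw [hmul] at hrel
    have h1 : z1 * x1 + (θ : F) * x2 * σ (σ z2) = -y1 - t1 :=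
      congrArg Prod.fst hrel
    have hσσ : σ (σ z2) = z2 := by
      rw [hσ, hσ, ← pow_mul]
      have : m * m = Fintype.card F := by rw [hcard]; ring
      rw [this, FiniteField.pow_card]
    rw [hσσ] at h1
    -- the element e
    set e : F := (θ : F) * x2 * z2 with he
    have he0 : e ≠ 0 := by
      have hx2 : x2 ≠ 0 := by rw [← ha]; exact pow_ne_zero _ ha0
      have hz2 : z2 ≠ 0 := by rw [← hb]; exact pow_ne_zero _ hb0
      exact mul_ne_zero (mul_ne_zero θ.ne_zero hx2) hz2
    have heval : e = -y1 - t1 - z1 * x1 := by linear_combination h1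
    have hfix : e ^ m = e := by
      have hs : (y1 + t1 + z1 * x1) ^ m = y1 + t1 + z1 * x1 := by
        rw [hm, add_pow_char_pow, add_pow_char_pow, ← hm, hy1, ht1, mul_pow, hz1, hx1]
      have : e = -(y1 + t1 + z1 * x1) := by rw [heval]; ring
      rw [this, (Odd.neg_pow ⟨k, hk⟩), hs]
    have hem1 : e ^ (m - 1) = 1 := by
      have h' : e ^ (m - 1) * e = 1 * e := by
        rw [one_mul, ← pow_succ, Nat.sub_add_cancel (by omega), hfix]
      exact mul_right_cancel₀ he0 h'
    have hesq : IsSquare e := by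
      rw [FiniteField.isSquare_iff hchar2 he0]
      have hD : Fintype.card F / 2 = (m - 1) * (k + 1) := by
        have h2 : (m - 1) * (k + 1) = 2*(k*k) + 2*k := by
          have hm1 : m - 1 = 2 * k := by omega
          rw [hm1]; ring
        rw [hcard]; omega
      rw [hD, pow_mul, hem1, one_pow]
    obtain ⟨d, hd⟩ := hesq
    apply hθns
    refine ⟨d / (a * b), ?_⟩
    have hab : a * b ≠ 0 := mul_ne_zero ha0 hb0
    rw [div_mul_div_comm]
    rw [eq_div_iff (mul_ne_zero hab hab)]
    have : e = d * d := hd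
    rw [he, ← ha, ← hb] at this
    linear_combination this
  constructor
  · -- independence
    intro u hu v hv hne
    rw [hG, SimpleGraph.fromRel_adj]
    push_neg
    intro _
    constructor
    · exact key u v hu hv
    · exact key v u hv hu
  · -- counting
    set A : Finset F := Finset.univ.filter (fun x : F => x ^ m = x) with hA
    set B : Finset F := Finset.univ.filter (fun x : F => ∃ u : F, u ≠ 0 ∧ u ^ 2 = x) with hB
    have hAcard : A.card = m := count_fixed_aux (by omega) hsub
    have hBcard : B.card = (q - 1) / 2 := by
      have hD : Fintype.card F / 2 = 2*(k*k) + 2*k := by rw [hcard]; omega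
      have hBeq : B = (Finset.univ.filter
          (fun u : Fˣ => u ^ (Fintype.card F / 2) = 1)).image Units.val := by
        ext x
        simp only [hB, Finset.mem_filter, Finset.mem_univ, true_and, Finset.mem_image]
        constructor
        · rintro ⟨u, hu0, hu⟩
          refine ⟨Units.mk0 x (by rw [← hu]; exact pow_ne_zero _ hu0), ?_, rfl⟩
          rw [← FiniteField.unit_isSquare_iff hchar2]
          exact ⟨Units.mk0 u hu0, by ext; simp only [Units.val_mul, Units.val_mk0]; rw [← hu]; ring⟩
        · rintro ⟨w, hw, rfl⟩
          rw [← FiniteField.unit_isSquare_iff hchar2] at hw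
          obtain ⟨r, hr⟩ := hw
          exact ⟨(r : F), r.ne_zero, by rw [hr]; push_cast; ring⟩
      rw [hBeq, Finset.card_image_of_injective _ (fun _ _ h => Units.ext h),
        count_pow_eq_one_aux (by omega) (by rw [hD, hq1]; exact ⟨2, by omega⟩)]
      rw [hqm]; omega
    have hIeq : I = ↑(((A ×ˢ B) ×ˢ (A ×ˢ (Finset.univ : Finset F))) :
        Finset ((F × F) × (F × F))) := by
      rw [hI]
      ext ⟨⟨x1, x2⟩, y1, y2⟩
      simp only [Set.mem_setOf_eq, Finset.coe_mem, Finset.mem_coe, Finset.mem_product,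
        Finset.mem_filter, Finset.mem_univ, true_and, and_true, hA, hB]
      tauto
    rw [hIeq, Set.ncard_coe_finset]
    rw [Finset.card_product, Finset.card_product, Finset.card_product,
      hAcard, hBcard, Finset.card_univ, hcard, ← hqm]
    -- m * ((q-1)/2) * (m * q) = q^2 * (q-1) / 2
    have hq4 : q = 4*(k*k) + 4*k + 1 := by rw [hqm]; omega
    have h2 : (q - 1) / 2 = 2*(k*k) + 2*k := by omega
    have hmm : m * m = q := by rw [hqm]; ring
    calc m * ((q - 1) / 2) * (m * q) = (m * m) * q * ((q-1)/2) := by ring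
      _ = q ^ 2 * ((q-1)/2) := by rw [hmm]; ring
      _ = q ^ 2 * (q - 1) / 2 := by
          rw [Nat.mul_div_assoc _ (⟨2*(k*k)+2*k, by omega⟩ : 2 ∣ q - 1)]
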